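/- (Phenomenological model, syndrome pair (1,1).) For every ρ ∈ M with Π₀ * ρ * Π₀ = ρ (a codespace-supported state), one has I₁(I₁(ρ)) = q² • Λ_I(Λ_I(ρ)) + (1−q) • Λ_{IX}(Λ_I(ρ)) + (1−q)·q • Λ_{IX}(Λ_{IX}(ρ)); i.e. the unnormalized channel p(1,1)·E^{(1,1)} conditioned on observed syndromes (1,1) equals q²Λ_I² + (1−q)Λ_{IX}Λ_I + (1−q)qΛ_{IX}². -/
import Mathlib


open Matrix Kronecker

/-- `χ(s) = (-1)^s` for `s ∈ ZMod 2`, valued in `ℂ`. -/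
noncomputable def chiC (s : ZMod 2) : ℂ := (-1 : ℂ) ^ s.val

/-- The Pauli `X` matrix. -/
noncomputable def Xm : Matrix (Fin 2) (Fin 2) ℂ := !![0, 1; 1, 0]

/-- The Pauli `Z` matrix. -/
noncomputable def Zm : Matrix (Fin 2) (Fin 2) ℂ := !![1, 0; 0, -1]

/-- The two-qubit operator `X ⊗ X` (the logical `X̄` of the `[[2,1,1]]` code). -/
noncomputable def XX : Matrix (Fin 2 × Fin 2) (Fin 2 × Fin 2) ℂ := Xm ⊗ₖ Xm

/-- The two-qubit operator `I ⊗ X` (the pure error of the `[[2,1,1]]` code). -/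
noncomputable def IX : Matrix (Fin 2 × Fin 2) (Fin 2 × Fin 2) ℂ :=
  (1 : Matrix (Fin 2) (Fin 2) ℂ) ⊗ₖ Xm

/-- The two-qubit operator `Z ⊗ Z`. -/
noncomputable def ZZ : Matrix (Fin 2 × Fin 2) (Fin 2 × Fin 2) ℂ := Zm ⊗ₖ Zm

/-- Projector onto the `(-1)^{s+1}` "syndrome-`s`" eigenspace of the
stabilizer `−ZZ` of the `[[2,1,1]]` code: `Π_s = (1/2)(1 − (-1)^s ZZ)`. -/
noncomputable def Proj (s : ZMod 2) : Matrix (Fin 2 × Fin 2) (Fin 2 × Fin 2) ℂ :=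
  (1 / 2 : ℂ) • (1 - chiC s • ZZ)

/-- Trivial-syndrome part of the phenomenological data-qubit error channel:
`Λ_I(ρ) = (1−p)² ρ + p² XXρXX`. -/
noncomputable def LamI (p : ℝ) (ρ : Matrix (Fin 2 × Fin 2) (Fin 2 × Fin 2) ℂ) :
    Matrix (Fin 2 × Fin 2) (Fin 2 × Fin 2) ℂ :=
  ((1 - p) ^ 2) • ρ + (p ^ 2) • (XX * ρ * XX)

/-- Flipped-syndrome part of the phenomenological data-qubit error channel:
`Λ_{IX}(ρ) = (1−p)p (IX ρ IX + (IX·XX) ρ (XX·IX))`. -/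
noncomputable def LamIX (p : ℝ) (ρ : Matrix (Fin 2 × Fin 2) (Fin 2 × Fin 2) ℂ) :
    Matrix (Fin 2 × Fin 2) (Fin 2 × Fin 2) ℂ :=
  ((1 - p) * p) • (IX * ρ * IX + (IX * XX) * ρ * (XX * IX))

/-- `P⁰ = (1−q)Λ_I + qΛ_{IX}`, the internal errors compatible with a correctly
read syndrome. -/
noncomputable def P0 (p q : ℝ) (ρ : Matrix (Fin 2 × Fin 2) (Fin 2 × Fin 2) ℂ) :
    Matrix (Fin 2 × Fin 2) (Fin 2 × Fin 2) ℂ :=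
  (1 - q) • LamI p ρ + q • LamIX p ρ

/-- `P¹ = qΛ_I + (1−q)Λ_{IX}`, the internal errors compatible with a flipped
syndrome bit. -/
noncomputable def P1 (p q : ℝ) (ρ : Matrix (Fin 2 × Fin 2) (Fin 2 × Fin 2) ℂ) :
    Matrix (Fin 2 × Fin 2) (Fin 2 × Fin 2) ℂ :=
  q • LamI p ρ + (1 - q) • LamIX p ρ

/-- The noisy measurement instrument of the phenomenological model:
`I_s(ρ) = P⁰(Π_s ρ Π_s) + P¹(Π_{s+1} ρ Π_{s+1})`. -/
noncomputable def Inst (p q : ℝ) (s : ZMod 2)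
    (ρ : Matrix (Fin 2 × Fin 2) (Fin 2 × Fin 2) ℂ) :
    Matrix (Fin 2 × Fin 2) (Fin 2 × Fin 2) ℂ :=
  P0 p q (Proj s * ρ * Proj s) + P1 p q (Proj (s + 1) * ρ * Proj (s + 1))

section Aux

lemma negKronAux {l m n p : Type*} (A : Matrix l m ℂ) (B : Matrix n p ℂ) :
    (-A) ⊗ₖ B = -(A ⊗ₖ B) := by
  ext ⟨i, i'⟩ ⟨j, j'⟩; simp

lemma kronNegAux {l m n p : Type*} (A : Matrix l m ℂ) (B : Matrix n p ℂ) :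
    A ⊗ₖ (-B) = -(A ⊗ₖ B) := by
  ext ⟨i, i'⟩ ⟨j, j'⟩; simp

lemma hZmZm : Zm * Zm = 1 := by
  ext i j; fin_cases i <;> fin_cases j <;> simp [Zm, Matrix.mul_apply, Fin.sum_univ_succ]
lemma hXmXm : Xm * Xm = 1 := by
  ext i j; fin_cases i <;> fin_cases j <;> simp [Xm, Matrix.mul_apply, Fin.sum_univ_succ]
lemma hZX : Zm * Xm = -(Xm * Zm) := by
  ext i j; fin_cases i <;> fin_cases j <;> simp [Xm, Zm, Matrix.mul_apply, Fin.sum_univ_succ]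

lemma ZZ_sq : ZZ * ZZ = 1 := by
  simp [ZZ, ← Matrix.mul_kronecker_mul, hZmZm]
lemma ZZ_XX : ZZ * XX = XX * ZZ := by
  rw [ZZ, XX, ← Matrix.mul_kronecker_mul, ← Matrix.mul_kronecker_mul, hZX,
    negKronAux, kronNegAux, neg_neg]
lemma ZZ_IX : ZZ * IX = -(IX * ZZ) := by
  rw [ZZ, IX, ← Matrix.mul_kronecker_mul, ← Matrix.mul_kronecker_mul, mul_one, one_mul, hZX,
    kronNegAux]
lemma IX_XX_comm : IX * XX = XX * IX := by
  simp [IX, XX, ← Matrix.mul_kronecker_mul]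
lemma XX_sq : XX * XX = 1 := by
  simp [XX, ← Matrix.mul_kronecker_mul, hXmXm]

lemma Proj0_def : Proj 0 = (1 / 2 : ℂ) • (1 - ZZ) := by
  simp [Proj, chiC]
lemma Proj1_def : Proj 1 = (1 / 2 : ℂ) • (1 + ZZ) := by
  simp [Proj, chiC, sub_neg_eq_add, ZMod.val_one, smul_add]

lemma P00 : Proj 0 * Proj 0 = Proj 0 := by
  rw [Proj0_def]
  simp only [Matrix.smul_mul, Matrix.mul_smul, sub_mul, mul_sub, ZZ_sq, one_mul, mul_one,
    smul_smul]
  norm_num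
  module
lemma P11 : Proj 1 * Proj 1 = Proj 1 := by
  rw [Proj1_def]
  simp only [Matrix.smul_mul, Matrix.mul_smul, add_mul, mul_add, ZZ_sq, one_mul, mul_one,
    smul_smul]
  norm_num
  module
lemma P10 : Proj 1 * Proj 0 = 0 := by
  rw [Proj0_def, Proj1_def]
  simp only [Matrix.smul_mul, Matrix.mul_smul, add_mul, mul_add, sub_mul, mul_sub, ZZ_sq,
    one_mul, mul_one, smul_smul]
  module
lemma P01 : Proj 0 * Proj 1 = 0 := by
  rw [Proj0_def, Proj1_def]
  simp only [Matrix.smul_mul, Matrix.mul_smul, add_mul, mul_add, sub_mul, mul_sub, ZZ_sq,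
    one_mul, mul_one, smul_smul]
  module
lemma P0_XX : Proj 0 * XX = XX * Proj 0 := by
  rw [Proj0_def]
  simp only [Matrix.smul_mul, Matrix.mul_smul, sub_mul, mul_sub, one_mul, mul_one, ZZ_XX]
lemma P1_XX : Proj 1 * XX = XX * Proj 1 := by
  rw [Proj1_def]
  simp only [Matrix.smul_mul, Matrix.mul_smul, add_mul, mul_add, one_mul, mul_one, ZZ_XX]
lemma P0_IX : Proj 0 * IX = IX * Proj 1 := by
  rw [Proj0_def, Proj1_def]
  simp only [Matrix.smul_mul, Matrix.mul_smul, sub_mul, mul_add, one_mul, mul_one, ZZ_IX,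
    sub_neg_eq_add]
lemma P1_IX : Proj 1 * IX = IX * Proj 0 := by
  rw [Proj0_def, Proj1_def]
  simp only [Matrix.smul_mul, Matrix.mul_smul, add_mul, mul_sub, one_mul, mul_one, ZZ_IX]
  module
lemma P0_E2 : Proj 0 * (XX * IX) = (XX * IX) * Proj 1 := by
  rw [← mul_assoc, P0_XX, mul_assoc, P0_IX, ← mul_assoc]
lemma P1_E2 : Proj 1 * (XX * IX) = (XX * IX) * Proj 0 := by
  rw [← mul_assoc, P1_XX, mul_assoc, P1_IX, ← mul_assoc]

variable {ρ : Matrix (Fin 2 × Fin 2) (Fin 2 × Fin 2) ℂ}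

lemma conj_move (E : Matrix (Fin 2 × Fin 2) (Fin 2 × Fin 2) ℂ) {s t : ZMod 2}
    (h : Proj s * E = E * Proj t) (h' : E * Proj s = Proj t * E) :
    Proj s * (E * ρ * E) * Proj s = E * (Proj t * ρ * Proj t) * E := by
  rw [show Proj s * (E * ρ * E) * Proj s = (Proj s * E) * ρ * (E * Proj s) by
    simp only [mul_assoc], h, h']
  simp only [mul_assoc]

lemma conj1_zero (hρ : Proj 0 * ρ * Proj 0 = ρ) : Proj 1 * ρ * Proj 1 = 0 := by
  rw [← hρ]
  simp only [← mul_assoc]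
  rw [P10]
  simp

lemma cI0 (p : ℝ) (hρ : Proj 0 * ρ * Proj 0 = ρ) :
    Proj 0 * LamI p ρ * Proj 0 = LamI p ρ := by
  simp only [LamI, mul_add, add_mul, Matrix.mul_smul, Matrix.smul_mul]
  rw [conj_move XX P0_XX P0_XX.symm, hρ]

lemma cI1 (p : ℝ) (hρ : Proj 0 * ρ * Proj 0 = ρ) :
    Proj 1 * LamI p ρ * Proj 1 = 0 := by
  simp only [LamI, mul_add, add_mul, Matrix.mul_smul, Matrix.smul_mul]
  rw [conj_move XX P1_XX P1_XX.symm, conj1_zero hρ]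
  simp

lemma cX1 (p : ℝ) (hρ : Proj 0 * ρ * Proj 0 = ρ) :
    Proj 1 * LamIX p ρ * Proj 1 = LamIX p ρ := by
  simp only [LamIX, IX_XX_comm, mul_add, add_mul, Matrix.mul_smul, Matrix.smul_mul]
  rw [conj_move IX P1_IX P0_IX.symm, conj_move (XX * IX) P1_E2 P0_E2.symm, hρ]

lemma cX0 (p : ℝ) (hρ : Proj 0 * ρ * Proj 0 = ρ) :
    Proj 0 * LamIX p ρ * Proj 0 = 0 := by
  simp only [LamIX, IX_XX_comm, mul_add, add_mul, Matrix.mul_smul, Matrix.smul_mul]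
  rw [conj_move IX P0_IX P1_IX.symm, conj_move (XX * IX) P0_E2 P1_E2.symm, conj1_zero hρ]
  simp

lemma LamI_zero (p : ℝ) : LamI p 0 = 0 := by simp [LamI]
lemma LamIX_zero (p : ℝ) : LamIX p 0 = 0 := by simp [LamIX]
lemma LamI_smul (p r : ℝ) : LamI p (r • ρ) = r • LamI p ρ := by
  simp [LamI, Matrix.mul_smul, Matrix.smul_mul, smul_add, smul_comm r]
lemma LamIX_smul (p r : ℝ) : LamIX p (r • ρ) = r • LamIX p ρ := by
  simp [LamIX, Matrix.mul_smul, Matrix.smul_mul, smul_add, smul_comm r]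

lemma XXIX' (B : Matrix (Fin 2 × Fin 2) (Fin 2 × Fin 2) ℂ) :
    XX * (IX * B) = IX * (XX * B) := by
  rw [← mul_assoc, ← IX_XX_comm, mul_assoc]
lemma XXXX' (B : Matrix (Fin 2 × Fin 2) (Fin 2 × Fin 2) ℂ) :
    XX * (XX * B) = B := by
  rw [← mul_assoc, XX_sq, one_mul]

lemma Lam_comm (p : ℝ) : LamI p (LamIX p ρ) = LamIX p (LamI p ρ) := by
  simp only [LamI, LamIX, mul_add, add_mul, Matrix.mul_smul, Matrix.smul_mul, smul_add,
    smul_smul, mul_assoc, XXIX', XXXX', IX_XX_comm, XX_sq, mul_one]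
  module

end Aux

/-- Phenomenological model, syndrome pair `(1,1)`: on a codespace-supported
state, `I₁(I₁(ρ)) = q²Λ_I² + (1−q)Λ_{IX}Λ_I + (1−q)qΛ_{IX}²` applied to `ρ`. -/
theorem phenomenological_syndrome_pair_11 (p q : ℝ)
    (ρ : Matrix (Fin 2 × Fin 2) (Fin 2 × Fin 2) ℂ)
    (hρ : Proj 0 * ρ * Proj 0 = ρ) :
    Inst p q 1 (Inst p q 1 ρ)
      = (q ^ 2) • LamI p (LamI p ρ) + (1 - q) • LamIX p (LamI p ρ)
          + ((1 - q) * q) • LamIX p (LamIX p ρ) := by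
  have h1 : (1 + 1 : ZMod 2) = 0 := by decide
  have hsig : Inst p q 1 ρ = q • LamI p ρ + (1 - q) • LamIX p ρ := by
    rw [Inst, h1, hρ, conj1_zero hρ]
    simp [P0, P1, LamI_zero, LamIX_zero]
  rw [show Inst p q 1 (Inst p q 1 ρ)
      = P0 p q (Proj 1 * Inst p q 1 ρ * Proj 1) + P1 p q (Proj 0 * Inst p q 1 ρ * Proj 0) by
    rw [Inst, h1]]
  have h11 : Proj 1 * Inst p q 1 ρ * Proj 1 = (1 - q) • LamIX p ρ := by
    rw [hsig]
    simp only [mul_add, add_mul, Matrix.mul_smul, Matrix.smul_mul]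
    rw [cI1 p hρ, cX1 p hρ]; simp
  have h00 : Proj 0 * Inst p q 1 ρ * Proj 0 = q • LamI p ρ := by
    rw [hsig]
    simp only [mul_add, add_mul, Matrix.mul_smul, Matrix.smul_mul]
    rw [cI0 p hρ, cX0 p hρ]; simp
  rw [h11, h00, P0, P1, LamI_smul, LamIX_smul, LamI_smul, LamIX_smul, Lam_comm]
  simp only [smul_smul, pow_two]
  module
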